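/- For orthonormal a_1, …, a_T ∈ ℝ^d, γ = 1/(3√T), δ = γ/(3kT), m = T, define f† = S_{δ,A}^k f̃ where f̃(x) = max_i (a_i^T x + (1 − i/T)γ) and A = span{a_i}. Then min_{x ∈ B_d} f†(x) ≤ −1/√T + γ + kδ. -/

import Mathlib

open MeasureTheory

/-- Subspace smoothing operator: average of `f` over `x + δ v` with `v` uniform in the
unit ball of the subspace `A`. -/
noncomputable def subSmooth {d : ℕ} (δ : ℝ) (A : Submodule ℝ (EuclideanSpace ℝ (Fin d)))
    (f : EuclideanSpace ℝ (Fin d) → ℝ) : EuclideanSpace ℝ (Fin d) → ℝ :=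
  fun x => ⨍ v in Metric.closedBall (0 : A) 1, f (x + δ • (v : EuclideanSpace ℝ (Fin d)))

/-- `f̃(x) = max_{i ∈ [T]} (aᵢᵀx + (1 - i/T)γ)` (here `i` runs over `1,…,T`). -/
noncomputable def ftil {d : ℕ} (T : ℕ) (γ : ℝ) (a : Fin T → EuclideanSpace ℝ (Fin d))
    (x : EuclideanSpace ℝ (Fin d)) : ℝ :=
  ⨆ i : Fin T, ((inner ℝ (a i) x : ℝ) + (1 - ((i : ℕ) + 1) / T) * γ)

section aux

variable {d : ℕ} {A : Submodule ℝ (EuclideanSpace ℝ (Fin d))}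

lemma myBall_ne_zero : volume (Metric.closedBall (0:A) 1) ≠ 0 :=
  (Metric.measure_closedBall_pos volume 0 one_pos).ne'

lemma myBall_ne_top : volume (Metric.closedBall (0:A) 1) ≠ ⊤ :=
  ((isCompact_closedBall (0:A) 1).measure_lt_top).ne

lemma myIntegrable {δ : ℝ} {L : NNReal} {f : EuclideanSpace ℝ (Fin d) → ℝ}
    (hf : LipschitzWith L f) (x : EuclideanSpace ℝ (Fin d)) :
    IntegrableOn (fun v : A => f (x + δ • (v : EuclideanSpace ℝ (Fin d))))
      (Metric.closedBall (0:A) 1) volume := by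
  have hc : Continuous fun v : A => f (x + δ • (v : EuclideanSpace ℝ (Fin d))) :=
    hf.continuous.comp (continuous_const.add ((continuous_subtype_val).const_smul δ))
  exact hc.locallyIntegrable.integrableOn_isCompact (isCompact_closedBall _ _)

lemma subSmooth_lipschitz {δ : ℝ} {L : NNReal} {f : EuclideanSpace ℝ (Fin d) → ℝ}
    (hf : LipschitzWith L f) : LipschitzWith L (subSmooth δ A f) := by
  apply LipschitzWith.of_dist_le_mul
  intro x y
  set s := Metric.closedBall (0:A) 1 with hs
  set c := (volume s).toReal with hcdef
  have hc : 0 < c := ENNReal.toReal_pos myBall_ne_zero myBall_ne_top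
  rw [Real.dist_eq]
  unfold subSmooth
  rw [setAverage_eq, setAverage_eq]
  rw [measureReal_def]
  have hsub : (volume s).toReal⁻¹ • (∫ v in s, f (x + δ • (v : EuclideanSpace ℝ (Fin d)))) -
      (volume s).toReal⁻¹ • (∫ v in s, f (y + δ • (v : EuclideanSpace ℝ (Fin d)))) =
      c⁻¹ * ∫ v in s, (f (x + δ • (v : EuclideanSpace ℝ (Fin d))) -
        f (y + δ • (v : EuclideanSpace ℝ (Fin d)))) := by
    rw [integral_sub (myIntegrable hf x) (myIntegrable hf y)]
    simp [smul_eq_mul, mul_sub, hcdef]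
    rfl
  rw [hsub, abs_mul, abs_of_nonneg (inv_nonneg.2 hc.le)]
  rw [← Real.norm_eq_abs (∫ v in s, _)]
  have hbound : ‖∫ v in s, (f (x + δ • (v : EuclideanSpace ℝ (Fin d))) -
      f (y + δ • (v : EuclideanSpace ℝ (Fin d))))‖ ≤ (L * dist x y) * c := by
    refine norm_setIntegral_le_of_norm_le_const (lt_top_iff_ne_top.2 myBall_ne_top) ?_
    · intro v _
      have := hf.dist_le_mul (x + δ • (v : EuclideanSpace ℝ (Fin d)))
        (y + δ • (v : EuclideanSpace ℝ (Fin d)))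
      simpa [Real.dist_eq, dist_add_right, dist_eq_norm] using this
  calc c⁻¹ * ‖∫ v in s, (f (x + δ • (v : EuclideanSpace ℝ (Fin d))) -
        f (y + δ • (v : EuclideanSpace ℝ (Fin d))))‖
      ≤ c⁻¹ * ((L * dist x y) * c) := by
        exact mul_le_mul_of_nonneg_left hbound (inv_nonneg.2 hc.le)
    _ = L * dist x y := by field_simp
    _ = (L : ℝ) * dist x y := rfl

lemma subSmooth_le {δ : ℝ} (hδ : 0 ≤ δ) {L : NNReal} {f : EuclideanSpace ℝ (Fin d) → ℝ}
    (hf : LipschitzWith L f) (x : EuclideanSpace ℝ (Fin d)) :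
    subSmooth δ A f x ≤ f x + L * δ := by
  set s := Metric.closedBall (0:A) 1 with hs
  set c := (volume s).toReal with hcdef
  have hc : 0 < c := ENNReal.toReal_pos myBall_ne_zero myBall_ne_top
  unfold subSmooth
  rw [setAverage_eq]
  have hpt : ∀ v ∈ s, f (x + δ • (v : EuclideanSpace ℝ (Fin d))) ≤ f x + L * δ := by
    intro v hv
    have h1 := hf.dist_le_mul (x + δ • (v : EuclideanSpace ℝ (Fin d))) x
    have h2 : dist (x + δ • (v : EuclideanSpace ℝ (Fin d))) x ≤ δ := by
      rw [dist_eq_norm, add_sub_cancel_left, norm_smul]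
      have hv1 : ‖(v : EuclideanSpace ℝ (Fin d))‖ ≤ 1 := by
        have := Metric.mem_closedBall.1 hv
        simpa [dist_eq_norm] using this
      calc |δ| * ‖(v : EuclideanSpace ℝ (Fin d))‖ ≤ |δ| * 1 :=
            mul_le_mul_of_nonneg_left hv1 (abs_nonneg δ)
        _ = δ := by rw [mul_one, abs_of_nonneg hδ]
    have h3 : dist (f (x + δ • (v : EuclideanSpace ℝ (Fin d)))) (f x) ≤ L * δ :=
      h1.trans (mul_le_mul_of_nonneg_left h2 L.coe_nonneg)
    have := (abs_le.1 (by rwa [Real.dist_eq] at h3)).2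
    linarith
  have hint : ∫ v in s, f (x + δ • (v : EuclideanSpace ℝ (Fin d))) ≤ (f x + L * δ) * c := by
    have := setIntegral_mono_on (myIntegrable hf x)
      (integrableOn_const myBall_ne_top)
      (Metric.isClosed_closedBall.measurableSet) hpt
    simpa [setIntegral_const, smul_eq_mul, mul_comm, measureReal_def] using this
  calc (volume s).toReal⁻¹ • (∫ v in s, f (x + δ • (v : EuclideanSpace ℝ (Fin d))))
      ≤ c⁻¹ * ((f x + L * δ) * c) := by
        exact mul_le_mul_of_nonneg_left hint (inv_nonneg.2 hc.le)
    _ = f x + L * δ := by field_simp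

end aux

lemma ftil_lipschitz {d T : ℕ} (hT : 0 < T) {γ : ℝ}
    {a : Fin T → EuclideanSpace ℝ (Fin d)} (ha : Orthonormal ℝ a) :
    LipschitzWith 1 (ftil T γ a) := by
  haveI : Nonempty (Fin T) := Fin.pos_iff_nonempty.mp hT
  have key : ∀ x y, ftil T γ a x ≤ ftil T γ a y + dist x y := by
    intro x y
    apply ciSup_le
    intro i
    have h1 : (inner ℝ (a i) x : ℝ) ≤ inner ℝ (a i) y + dist x y := by
      have h2 : (inner ℝ (a i) (x - y) : ℝ) ≤ ‖a i‖ * ‖x - y‖ := real_inner_le_norm _ _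
      rw [ha.1 i, one_mul] at h2
      rw [inner_sub_right] at h2
      rw [dist_eq_norm]
      linarith
    have h3 : (inner ℝ (a i) y : ℝ) + (1 - ((i : ℕ) + 1) / T) * γ ≤ ftil T γ a y :=
      le_ciSup (f := fun j : Fin T => (inner ℝ (a j) y : ℝ) + (1 - ((j : ℕ) + 1) / T) * γ)
        (Set.Finite.bddAbove (Set.finite_range _)) i
    linarith
  apply LipschitzWith.of_dist_le_mul
  intro x y
  rw [Real.dist_eq, NNReal.coe_one, one_mul, abs_sub_le_iff]
  constructor
  · linarith [key x y]
  · linarith [key y x, dist_comm x y]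


/-- With `γ = 1/(3√T)` and `δ = γ/(3kT)`, the minimum of the hard function
`f† = S_{δ,A}^k f̃` over the unit ball is at most `-1/√T + γ + kδ`. -/
theorem stmt18 (d T k : ℕ) (hT : 0 < T) (hk : 0 < k)
    (a : Fin T → EuclideanSpace ℝ (Fin d)) (ha : Orthonormal ℝ a) :
    ∃ x ∈ Metric.closedBall (0 : EuclideanSpace ℝ (Fin d)) 1,
      (subSmooth (1 / (3 * Real.sqrt T) / (3 * k * T))
          (Submodule.span ℝ (Set.range a)))^[k] (ftil T (1 / (3 * Real.sqrt T)) a) x ≤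
        -1 / Real.sqrt T + 1 / (3 * Real.sqrt T) +
          k * (1 / (3 * Real.sqrt T) / (3 * k * T)) := by
  haveI : Nonempty (Fin T) := Fin.pos_iff_nonempty.mp hT
  have hTr : (0:ℝ) < T := Nat.cast_pos.2 hT
  have hsT : 0 < Real.sqrt T := Real.sqrt_pos.2 hTr
  set γ : ℝ := 1 / (3 * Real.sqrt T) with hγ
  set δ : ℝ := γ / (3 * k * T) with hδdef
  have hδ : 0 ≤ δ := by positivity
  set A := Submodule.span ℝ (Set.range a) with hA
  set xh : EuclideanSpace ℝ (Fin d) := ∑ j : Fin T, (-1 / Real.sqrt T) • a j with hxh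
  have hinner : ∀ i : Fin T, (inner ℝ (a i) xh : ℝ) = -1 / Real.sqrt T := fun i =>
    ha.inner_right_fintype (fun _ => -1 / Real.sqrt T) i
  have hmem : xh ∈ Metric.closedBall (0 : EuclideanSpace ℝ (Fin d)) 1 := by
    rw [Metric.mem_closedBall, dist_zero_right]
    have hn : (inner ℝ xh xh : ℝ) = 1 := by
      rw [hxh, ha.inner_sum]
      simp only [RCLike.conj_to_real]
      rw [Finset.sum_const, Finset.card_univ, Fintype.card_fin]
      rw [div_mul_div_comm]
      rw [Real.mul_self_sqrt hTr.le]
      field_simp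
      rw [nsmul_eq_mul, mul_one_div_cancel hTr.ne']
    have := real_inner_self_eq_norm_sq xh
    nlinarith [norm_nonneg xh]
  have hftil : ftil T γ a xh ≤ -1 / Real.sqrt T + γ := by
    apply ciSup_le
    intro i
    rw [hinner i]
    have h0 : 0 ≤ ((i : ℕ) + 1) / (T:ℝ) * γ := by positivity
    have : (1 - ((i : ℕ) + 1) / (T:ℝ)) * γ ≤ γ := by nlinarith
    linarith
  have main : ∀ n : ℕ, LipschitzWith 1 ((subSmooth δ A)^[n] (ftil T γ a)) ∧
      ∀ x, (subSmooth δ A)^[n] (ftil T γ a) x ≤ ftil T γ a x + n * δ := by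
    intro n
    induction n with
    | zero => exact ⟨ftil_lipschitz hT ha, fun x => by simp⟩
    | succ n ih =>
      rw [Function.iterate_succ_apply']
      refine ⟨subSmooth_lipschitz ih.1, fun x => ?_⟩
      have h1 := subSmooth_le (A := A) hδ ih.1 x
      have h2 := ih.2 x
      rw [NNReal.coe_one, one_mul] at h1
      push_cast
      linarith
  refine ⟨xh, hmem, ?_⟩
  have := (main k).2 xh
  have hk' : (subSmooth δ A)^[k] (ftil T γ a) xh ≤ -1 / Real.sqrt T + γ + k * δ := by
    linarith
  exact hk'
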